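/- Let n ≥ 1 and let L : ℝ → ℂ → Matrix (Fin n) (Fin n) ℂ and A : ℝ → ℂ → Matrix (Fin n) (Fin n) ℂ be such that for every λ ∈ ℂ the map t ↦ L t λ is differentiable with derivative (d/dt)(L t λ) = (L t λ)·(A t λ) − (A t λ)·(L t λ). Then the spectral curve of L t is independent of t: for all t ∈ ℝ and all λ, μ ∈ ℂ, det(L t λ − μ·1) = det(L 0 λ − μ·1). -/

import Mathlib

open Matrix Finset

/-- Derivative of the determinant of a matrix-valued function: `(det M)' = tr(adj M ⬝ M')`. -/
lemma hasDerivAt_det_aux {n : ℕ} (M : ℝ → Matrix (Fin n) (Fin n) ℂ)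
    (M' : Matrix (Fin n) (Fin n) ℂ) (x : ℝ)
    (h : ∀ i j, HasDerivAt (fun t => M t i j) (M' i j) x) :
    HasDerivAt (fun t => (M t).det) ((Matrix.adjugate (M x) * M').trace) x := by
  have h2 : HasDerivAt (fun t => (M t).det)
      (∑ σ : Equiv.Perm (Fin n), ((Equiv.Perm.sign σ : ℤ) : ℂ) *
        ∑ i, (∏ j ∈ Finset.univ.erase i, M x (σ j) j) • M' (σ i) i) x := by
    simp only [Matrix.det_apply']
    exact HasDerivAt.fun_sum fun σ _ =>
      (HasDerivAt.fun_finsetProd (fun i _ => h (σ i) i)).const_mul _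
  convert h2 using 1
  have key : ∀ i : Fin n,
      ((M x).updateCol i (fun r => M' r i)).det
        = ∑ σ : Equiv.Perm (Fin n), ((Equiv.Perm.sign σ : ℤ) : ℂ) *
            ((∏ j ∈ Finset.univ.erase i, M x (σ j) j) * M' (σ i) i) := by
    intro i
    rw [Matrix.det_apply']
    refine Finset.sum_congr rfl fun σ _ => ?_
    congr 1
    rw [← Finset.prod_erase_mul _ _ (Finset.mem_univ i)]
    congr 1
    · exact Finset.prod_congr rfl fun j hj => by
        rw [Matrix.updateCol_apply, if_neg (Finset.ne_of_mem_erase hj)]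
    · rw [Matrix.updateCol_apply, if_pos rfl]
  have lhs : (Matrix.adjugate (M x) * M').trace
      = ∑ i, ((M x).updateCol i (fun r => M' r i)).det := by
    have : ∀ i : Fin n, ((M x).updateCol i (fun r => M' r i)).det
        = ((M x).adjugate *ᵥ (fun r => M' r i)) i := by
      intro i
      rw [← Matrix.cramer_eq_adjugate_mulVec, Matrix.cramer_apply]
    simp only [this, Matrix.trace, Matrix.diag, Matrix.mul_apply, Matrix.mulVec,
      dotProduct]
  rw [lhs]
  simp only [key]
  rw [Finset.sum_comm]
  refine Finset.sum_congr rfl fun σ _ => ?_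
  rw [Finset.mul_sum]
  exact Finset.sum_congr rfl fun i _ => by rw [smul_eq_mul]

/-- The spectral curve `det(L_λ − μ·1) = 0` is preserved by a Lax
equation `dL_λ/dt = [L_λ, A_λ]` with spectral parameter. -/
theorem statement1 (n : ℕ) (hn : 1 ≤ n)
    (L A : ℝ → ℂ → Matrix (Fin n) (Fin n) ℂ)
    (hLax : ∀ (lam : ℂ) (t : ℝ) (i j : Fin n),
      HasDerivAt (fun s : ℝ => L s lam i j)
        ((L t lam * A t lam - A t lam * L t lam) i j) t)
    (t : ℝ) (lam μ : ℂ) :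
    (L t lam - μ • (1 : Matrix (Fin n) (Fin n) ℂ)).det
      = (L 0 lam - μ • (1 : Matrix (Fin n) (Fin n) ℂ)).det := by
  set M : ℝ → Matrix (Fin n) (Fin n) ℂ :=
    fun s => L s lam - μ • (1 : Matrix (Fin n) (Fin n) ℂ) with hM
  have hcomm : ∀ x : ℝ, M x * A x lam - A x lam * M x
      = L x lam * A x lam - A x lam * L x lam := by
    intro x
    simp only [hM, sub_mul, mul_sub, Matrix.smul_mul, Matrix.mul_smul,
      Matrix.one_mul, Matrix.mul_one]
    abel
  have hM' : ∀ (x : ℝ) (i j : Fin n),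
      HasDerivAt (fun s : ℝ => M s i j) ((M x * A x lam - A x lam * M x) i j) x := by
    intro x i j
    rw [hcomm x]
    have : (fun s : ℝ => M s i j)
        = fun s : ℝ => L s lam i j - (μ • (1 : Matrix (Fin n) (Fin n) ℂ)) i j := by
      funext s; simp [hM, Matrix.sub_apply]
    rw [this]
    simpa using (hLax lam x i j).sub_const ((μ • (1 : Matrix (Fin n) (Fin n) ℂ)) i j)
  have hDet : ∀ x : ℝ, HasDerivAt (fun s => (M s).det) 0 x := by
    intro x
    have h := hasDerivAt_det_aux M (M x * A x lam - A x lam * M x) x (hM' x)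
    have hz : ((M x).adjugate * (M x * A x lam - A x lam * M x)).trace = 0 := by
      rw [mul_sub, Matrix.trace_sub]
      have h1 : ((M x).adjugate * (M x * A x lam)).trace
          = (M x).det • (A x lam).trace := by
        rw [← mul_assoc, Matrix.adjugate_mul, Matrix.smul_mul, Matrix.one_mul,
          Matrix.trace_smul]
      have h2 : ((M x).adjugate * (A x lam * M x)).trace
          = (M x).det • (A x lam).trace := by
        rw [← mul_assoc, Matrix.trace_mul_comm, ← mul_assoc, Matrix.mul_adjugate,
          Matrix.smul_mul, Matrix.one_mul, Matrix.trace_smul]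
      rw [h1, h2, sub_self]
    rwa [hz] at h
  have hconst : ∀ s : ℝ, (M s).det = (M 0).det := by
    intro s
    exact is_const_of_deriv_eq_zero (fun x => (hDet x).differentiableAt)
      (fun x => (hDet x).deriv) s 0
  exact hconst t
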